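/- The function f(a) = a + 1 - 2^a on the interval [0,1) satisfies 0 ≤ f(a) ≤ lg(lg e) + 1 - lg e, where lg denotes logarithm base 2 and e is Euler's number. The maximum is attained at a = lg(lg e). -/

import Mathlib

open Real

/-- The function `f a = a + 1 - 2^a` on `[0,1)` satisfies
`0 ≤ f a ≤ lg (lg e) + 1 - lg e`, with the maximum attained at `a = lg (lg e)`. -/
theorem stmt0 :
    (∀ a : ℝ, 0 ≤ a → a < 1 →
      0 ≤ a + 1 - (2:ℝ)^a ∧
      a + 1 - (2:ℝ)^a ≤ logb 2 (logb 2 (exp 1)) + 1 - logb 2 (exp 1)) ∧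
    logb 2 (logb 2 (exp 1)) + 1 - (2:ℝ)^(logb 2 (logb 2 (exp 1)))
      = logb 2 (logb 2 (exp 1)) + 1 - logb 2 (exp 1) := by
  have hL : (0:ℝ) < Real.log 2 := Real.log_pos (by norm_num)
  have hlge : logb 2 (exp 1) = 1 / Real.log 2 := by
    rw [logb, Real.log_exp]
  have hlgepos : 0 < logb 2 (exp 1) := by rw [hlge]; positivity
  have hpow : (2:ℝ) ^ (logb 2 (logb 2 (exp 1))) = logb 2 (exp 1) :=
    Real.rpow_logb (by norm_num) (by norm_num) hlgepos
  set c := logb 2 (logb 2 (exp 1)) with hc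
  constructor
  · intro a ha0 ha1
    have h2a : (2:ℝ) ^ a = Real.exp (Real.log 2 * a) :=
      Real.rpow_def_of_pos (by norm_num) a
    constructor
    · -- lower bound: 2^a ≤ 1 + a by convexity of exp
      have hconv := convexOn_exp.2 (Set.mem_univ (0:ℝ)) (Set.mem_univ (Real.log 2))
        (by linarith : (0:ℝ) ≤ 1 - a) ha0 (by ring)
      simp only [smul_eq_mul, mul_zero, zero_add, Real.exp_zero, Real.exp_log
        (by norm_num : (0:ℝ) < 2)] at hconv
      rw [h2a, mul_comm (Real.log 2) a]
      nlinarith [hconv]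
    · -- upper bound via tangent line at c
      have hexpc : Real.exp (Real.log 2 * c) = 1 / Real.log 2 := by
        rw [← Real.rpow_def_of_pos (by norm_num : (0:ℝ) < 2), hpow, hlge]
      have htan : Real.log 2 * (a - c) + 1 ≤ Real.exp (Real.log 2 * (a - c)) :=
        Real.add_one_le_exp _
      have hsplit : Real.exp (Real.log 2 * a)
          = Real.exp (Real.log 2 * c) * Real.exp (Real.log 2 * (a - c)) := by
        rw [← Real.exp_add]; ring_nf
      have hge : (1 / Real.log 2) * (Real.log 2 * (a - c) + 1)
          ≤ Real.exp (Real.log 2 * a) := by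
        rw [hsplit, hexpc]
        exact mul_le_mul_of_nonneg_left htan (by positivity)
      have hne : Real.log 2 ≠ 0 := ne_of_gt hL
      have hexpand : (1 / Real.log 2) * (Real.log 2 * (a - c) + 1)
          = (a - c) + 1 / Real.log 2 := by
        field_simp
      rw [hexpand] at hge
      rw [h2a, hlge]
      linarith
  · rw [hpow]
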